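/- Suppose k ≥ 2 and k < m < 2k. The number of fault-free tilings of an m×k rectangle by tiles of sizes k×1 and k×k equals 2m − 2k + 3. -/
import Mathlib


/-- The cells of an `m × n` rectangle: `(row, column)` with `row < m`, `column < n`. -/
def grid (m n : ℕ) : Finset (ℕ × ℕ) := Finset.range m ×ˢ Finset.range n

/-- A horizontal `k × 1` tile: `k` consecutive cells in one row. -/
def IsHTile (k : ℕ) (t : Finset (ℕ × ℕ)) : Prop :=
  ∃ i j : ℕ, t = (Finset.range k).image fun s => (i, j + s)

/-- A vertical `k × 1` tile: `k` consecutive cells in one column. -/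
def IsVTile (k : ℕ) (t : Finset (ℕ × ℕ)) : Prop :=
  ∃ i j : ℕ, t = (Finset.range k).image fun s => (i + s, j)

/-- A tiling of the `m × n` rectangle by `k × 1` tiles. -/
def IsTiling (m n k : ℕ) (T : Finset (Finset (ℕ × ℕ))) : Prop :=
  (∀ t ∈ T, IsHTile k t ∨ IsVTile k t) ∧
  (T : Set (Finset (ℕ × ℕ))).PairwiseDisjoint id ∧
  T.biUnion id = grid m n

/-- The number of tilings of the `m × n` rectangle by `k × 1` tiles. -/
noncomputable def numTilings (m n k : ℕ) : ℕ :=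
  Nat.card {T : Finset (Finset (ℕ × ℕ)) // IsTiling m n k T}

/-- The tiling `T` has a fault at `x = a`: every tile lies entirely in
columns `< a` or entirely in columns `≥ a`. -/
def HasFaultAt (T : Finset (Finset (ℕ × ℕ))) (a : ℕ) : Prop :=
  ∀ t ∈ T, (∀ c ∈ t, c.2 < a) ∨ (∀ c ∈ t, a ≤ c.2)

/-- A tiling of a rectangle with `n` columns is fault-free. -/
def FaultFree (n : ℕ) (T : Finset (Finset (ℕ × ℕ))) : Prop :=
  ∀ a : ℕ, 0 < a → a < n → ¬ HasFaultAt T a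

/-- The number of fault-free tilings of the `m × n` rectangle by `k × 1` tiles. -/
noncomputable def numFFTilings (m n k : ℕ) : ℕ :=
  Nat.card {T : Finset (Finset (ℕ × ℕ)) // IsTiling m n k T ∧ FaultFree n T}

/-- A `k × k` square tile. -/
def IsSqTile (k : ℕ) (t : Finset (ℕ × ℕ)) : Prop :=
  ∃ i j : ℕ, t = (Finset.range k ×ˢ Finset.range k).image fun p => (i + p.1, j + p.2)

/-- A tiling of the `m × n` rectangle by `k × 1` and `k × k` tiles. -/
def IsTiling' (m n k : ℕ) (T : Finset (Finset (ℕ × ℕ))) : Prop :=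
  (∀ t ∈ T, IsHTile k t ∨ IsVTile k t ∨ IsSqTile k t) ∧
  (T : Set (Finset (ℕ × ℕ))).PairwiseDisjoint id ∧
  T.biUnion id = grid m n

/-- The number of fault-free tilings of the `m × n` rectangle by `k × 1` and `k × k` tiles. -/
noncomputable def numFFTilings' (m n k : ℕ) : ℕ :=
  Nat.card {T : Finset (Finset (ℕ × ℕ)) // IsTiling' m n k T ∧ FaultFree n T}


namespace FF15
open Finset

def hrow (k x : ℕ) : Finset (ℕ × ℕ) := (Finset.range k).image fun s => (x, s)
def vt (k i j : ℕ) : Finset (ℕ × ℕ) := (Finset.range k).image fun s => (i + s, j)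
def sqr (k i : ℕ) : Finset (ℕ × ℕ) := (Finset.range k ×ˢ Finset.range k).image fun p => (i + p.1, p.2)

@[simp] lemma mem_hrow {k x : ℕ} {c : ℕ × ℕ} : c ∈ hrow k x ↔ c.1 = x ∧ c.2 < k := by
  obtain ⟨a, b⟩ := c
  simp only [hrow, Finset.mem_image, Finset.mem_range, Prod.mk.injEq]
  constructor
  · rintro ⟨s, hs, h1, h2⟩; omega
  · rintro ⟨h1, h2⟩; exact ⟨b, h2, h1.symm, rfl⟩

@[simp] lemma mem_vt {k i j : ℕ} {c : ℕ × ℕ} : c ∈ vt k i j ↔ i ≤ c.1 ∧ c.1 < i + k ∧ c.2 = j := by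
  obtain ⟨a, b⟩ := c
  simp only [vt, Finset.mem_image, Finset.mem_range, Prod.mk.injEq]
  constructor
  · rintro ⟨s, hs, h1, h2⟩; omega
  · rintro ⟨h1, h2, h3⟩; exact ⟨a - i, by omega, by omega, h3.symm⟩

@[simp] lemma mem_sqr {k i : ℕ} {c : ℕ × ℕ} : c ∈ sqr k i ↔ i ≤ c.1 ∧ c.1 < i + k ∧ c.2 < k := by
  obtain ⟨a, b⟩ := c
  simp only [sqr, Finset.mem_image, Finset.mem_product, Finset.mem_range, Prod.exists,
    Prod.mk.injEq]
  constructor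
  · rintro ⟨p, q, ⟨hp, hq⟩, h1, h2⟩; omega
  · rintro ⟨h1, h2, h3⟩; exact ⟨a - i, b, ⟨by omega, h3⟩, by omega, rfl⟩

@[simp] lemma mem_grid {m n : ℕ} {c : ℕ × ℕ} : c ∈ grid m n ↔ c.1 < m ∧ c.2 < n := by
  simp [grid, Finset.mem_product]

/-- shape inequalities -/
lemma hrow_ne_vt {k x i j : ℕ} (hk : 2 ≤ k) : hrow k x ≠ vt k i j := by
  intro h
  have h1 : ((i : ℕ), j) ∈ hrow k x := by rw [h]; simp; omega
  have h2 : ((i + 1 : ℕ), j) ∈ hrow k x := by rw [h]; simp; omega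
  simp at h1 h2; omega

lemma hrow_ne_sqr {k x i : ℕ} (hk : 2 ≤ k) : hrow k x ≠ sqr k i := by
  intro h
  have h1 : ((i : ℕ), 0) ∈ hrow k x := by rw [h]; simp; omega
  have h2 : ((i + 1 : ℕ), 0) ∈ hrow k x := by rw [h]; simp; omega
  simp at h1 h2; omega

lemma vt_ne_sqr {k i j i' : ℕ} (hk : 2 ≤ k) : vt k i j ≠ sqr k i' := by
  intro h
  have h1 : ((i' : ℕ), 0) ∈ vt k i j := by rw [h]; simp; omega
  have h2 : ((i' : ℕ), 1) ∈ vt k i j := by rw [h]; simp; omega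
  simp at h1 h2; omega

/-- injectivity-type facts -/
lemma hrow_inj {k x x' : ℕ} (hk : 2 ≤ k) (h : hrow k x = hrow k x') : x = x' := by
  have : ((x : ℕ), 0) ∈ hrow k x' := by rw [← h]; simp; omega
  simp at this; omega

lemma vt_inj {k i j i' j' : ℕ} (hk : 2 ≤ k) (h : vt k i j = vt k i' j') : i = i' ∧ j = j' := by
  have h1 : ((i : ℕ), j) ∈ vt k i' j' := by rw [← h]; simp; omega
  have h2 : ((i' : ℕ), j') ∈ vt k i j := by rw [h]; simp; omega
  simp at h1 h2; omega

lemma sqr_inj {k i i' : ℕ} (hk : 2 ≤ k) (h : sqr k i = sqr k i') : i = i' := by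
  have h1 : ((i : ℕ), 0) ∈ sqr k i' := by rw [← h]; simp; omega
  have h2 : ((i' : ℕ), 0) ∈ sqr k i := by rw [h]; simp; omega
  simp at h1 h2; omega

section Structure

variable {k m : ℕ} {T : Finset (Finset (ℕ × ℕ))}

lemma tile_subset_grid (hT : IsTiling' m k k T) {t : Finset (ℕ × ℕ)} (ht : t ∈ T) :
    t ⊆ grid m k := by
  rw [← hT.2.2]
  intro c hc
  exact Finset.mem_biUnion.mpr ⟨t, ht, hc⟩

lemma tiles_eq_of_mem (hT : IsTiling' m k k T) {t t' : Finset (ℕ × ℕ)} (ht : t ∈ T)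
    (ht' : t' ∈ T) {c : ℕ × ℕ} (hc : c ∈ t) (hc' : c ∈ t') : t = t' := by
  by_contra hne
  exact Finset.disjoint_left.mp (hT.2.1 ht ht' hne) hc hc'

lemma exists_tile (hT : IsTiling' m k k T) {c : ℕ × ℕ} (hc : c ∈ grid m k) :
    ∃ t ∈ T, c ∈ t := by
  rw [← hT.2.2] at hc
  exact Finset.mem_biUnion.mp hc

/-- every tile in a tiling has one of the three normalized shapes -/
lemma shape (hk : 2 ≤ k) (hT : IsTiling' m k k T) {t : Finset (ℕ × ℕ)} (ht : t ∈ T) :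
    (∃ x, x < m ∧ t = hrow k x) ∨ (∃ i j, i + k ≤ m ∧ j < k ∧ t = vt k i j) ∨
      (∃ i, i + k ≤ m ∧ t = sqr k i) := by
  have hsub := tile_subset_grid hT ht
  have hk0 : 0 < k := by omega
  rcases hT.1 t ht with ⟨i, j, rfl⟩ | ⟨i, j, rfl⟩ | ⟨i, j, rfl⟩
  · left
    have hc1 : ((i : ℕ), j + 0) ∈ grid m k :=
      hsub (Finset.mem_image.mpr ⟨0, by simp [hk0], rfl⟩)
    have hc2 : ((i : ℕ), j + (k - 1)) ∈ grid m k :=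
      hsub (Finset.mem_image.mpr ⟨k - 1, by simp; omega, rfl⟩)
    simp only [mem_grid] at hc1 hc2
    refine ⟨i, by omega, ?_⟩
    have hj : j = 0 := by omega
    subst hj
    simp [hrow]
  · right; left
    have hc2 : ((i + (k - 1) : ℕ), j) ∈ grid m k :=
      hsub (Finset.mem_image.mpr ⟨k - 1, by simp; omega, rfl⟩)
    simp only [mem_grid] at hc2
    exact ⟨i, j, by omega, by omega, rfl⟩
  · right; right
    have hc2 : ((i + (k - 1) : ℕ), j + (k - 1)) ∈ grid m k :=
      hsub (Finset.mem_image.mpr ⟨(k - 1, k - 1), by simp [Finset.mem_product]; omega, rfl⟩)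
    simp only [mem_grid] at hc2
    refine ⟨i, by omega, ?_⟩
    have hj : j = 0 := by omega
    subst hj
    simp [sqr, IsSqTile]

end Structure


section Tilings

variable {k m i : ℕ}

def rowsOut (m k i : ℕ) : Finset ℕ := Finset.range m \ Finset.Ico i (i + k)

@[simp] lemma mem_rowsOut {m k i x : ℕ} :
    x ∈ rowsOut m k i ↔ x < m ∧ (x < i ∨ i + k ≤ x) := by
  simp [rowsOut]; omega

def TH (m k : ℕ) : Finset (Finset (ℕ × ℕ)) := (Finset.range m).image (hrow k)

def Tsq (m k i : ℕ) : Finset (Finset (ℕ × ℕ)) :=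
  insert (sqr k i) ((rowsOut m k i).image (hrow k))

def Tvt (m k i : ℕ) : Finset (Finset (ℕ × ℕ)) :=
  ((Finset.range k).image (vt k i)) ∪ ((rowsOut m k i).image (hrow k))

lemma isHTile_hrow (x : ℕ) : IsHTile k (hrow k x) := ⟨x, 0, by simp [hrow]⟩

lemma isVTile_vt (i j : ℕ) : IsVTile k (vt k i j) := ⟨i, j, rfl⟩

lemma isSqTile_sqr (i : ℕ) : IsSqTile k (sqr k i) := ⟨i, 0, by simp [sqr]⟩

lemma hrow_disj {x x' : ℕ} (h : x ≠ x') : Disjoint (hrow k x) (hrow k x') := by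
  rw [Finset.disjoint_left]
  intro c hc hc'
  simp at hc hc'
  omega

lemma isTiling_TH (hk : 2 ≤ k) : IsTiling' m k k (TH m k) := by
  refine ⟨?_, ?_, ?_⟩
  · intro t ht
    simp only [TH, Finset.mem_image] at ht
    obtain ⟨x, _, rfl⟩ := ht
    exact Or.inl (isHTile_hrow x)
  · intro t ht t' ht' hne
    simp only [TH, Finset.coe_image, Set.mem_image] at ht ht'
    obtain ⟨x, _, rfl⟩ := ht
    obtain ⟨x', _, rfl⟩ := ht'
    exact hrow_disj (fun h => hne (by rw [h]))
  · ext c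
    simp only [Finset.mem_biUnion, TH, Finset.mem_image, mem_grid, id]
    constructor
    · rintro ⟨t, ⟨x, hx, rfl⟩, hc⟩
      simp only [Finset.mem_range] at hx
      simp only [mem_hrow] at hc
      omega
    · rintro ⟨h1, h2⟩
      exact ⟨hrow k c.1, ⟨c.1, Finset.mem_range.mpr h1, rfl⟩, by simp [h2]⟩

lemma isTiling_Tsq (hk : 2 ≤ k) (hik : i + k ≤ m) : IsTiling' m k k (Tsq m k i) := by
  refine ⟨?_, ?_, ?_⟩
  · intro t ht
    simp only [Tsq, Finset.mem_insert, Finset.mem_image] at ht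
    rcases ht with rfl | ⟨x, _, rfl⟩
    · exact Or.inr (Or.inr (isSqTile_sqr i))
    · exact Or.inl (isHTile_hrow x)
  · intro t ht t' ht' hne
    simp only [Tsq, Finset.coe_insert, Set.mem_insert_iff, Finset.coe_image,
      Set.mem_image, Finset.mem_coe, mem_rowsOut] at ht ht'
    rcases ht with rfl | ⟨x, hx, rfl⟩ <;> rcases ht' with rfl | ⟨x', hx', rfl⟩
    · exact absurd rfl hne
    · simp only [Function.onFun, id_eq]; rw [Finset.disjoint_left]; intro c hc hc'; simp at hc hc'; omega
    · simp only [Function.onFun, id_eq]; rw [Finset.disjoint_left]; intro c hc hc'; simp at hc hc'; omega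
    · exact hrow_disj (fun h => hne (by rw [h]))
  · ext c
    simp only [Finset.mem_biUnion, Tsq, Finset.mem_insert, Finset.mem_image, mem_grid, id]
    constructor
    · rintro ⟨t, rfl | ⟨x, hx, rfl⟩, hc⟩
      · simp only [mem_sqr] at hc; omega
      · simp only [mem_rowsOut] at hx; simp only [mem_hrow] at hc; omega
    · rintro ⟨h1, h2⟩
      by_cases hc : i ≤ c.1 ∧ c.1 < i + k
      · exact ⟨sqr k i, Or.inl rfl, by simp; omega⟩
      · exact ⟨hrow k c.1, Or.inr ⟨c.1, by simp; omega, rfl⟩, by simp [h2]⟩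

lemma isTiling_Tvt (hk : 2 ≤ k) (hik : i + k ≤ m) : IsTiling' m k k (Tvt m k i) := by
  refine ⟨?_, ?_, ?_⟩
  · intro t ht
    simp only [Tvt, Finset.mem_union, Finset.mem_image] at ht
    rcases ht with ⟨j, _, rfl⟩ | ⟨x, _, rfl⟩
    · exact Or.inr (Or.inl (isVTile_vt i j))
    · exact Or.inl (isHTile_hrow x)
  · intro t ht t' ht' hne
    simp only [Tvt, Finset.coe_union, Set.mem_union, Finset.coe_image,
      Set.mem_image, Finset.mem_coe, mem_rowsOut, Finset.mem_range] at ht ht'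
    rcases ht with ⟨j, hj, rfl⟩ | ⟨x, hx, rfl⟩ <;> rcases ht' with ⟨j', hj', rfl⟩ | ⟨x', hx', rfl⟩
    · have hjj : j ≠ j' := fun h => hne (by rw [h])
      simp only [Function.onFun, id_eq]; rw [Finset.disjoint_left]; intro c hc hc'; simp at hc hc'; omega
    · simp only [Function.onFun, id_eq]; rw [Finset.disjoint_left]; intro c hc hc'; simp at hc hc'; omega
    · simp only [Function.onFun, id_eq]; rw [Finset.disjoint_left]; intro c hc hc'; simp at hc hc'; omega
    · exact hrow_disj (fun h => hne (by rw [h]))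
  · ext c
    simp only [Finset.mem_biUnion, Tvt, Finset.mem_union, Finset.mem_image, mem_grid, id]
    constructor
    · rintro ⟨t, ⟨j, hj, rfl⟩ | ⟨x, hx, rfl⟩, hc⟩
      · simp only [Finset.mem_range] at hj; simp only [mem_vt] at hc; omega
      · simp only [mem_rowsOut] at hx; simp only [mem_hrow] at hc; omega
    · rintro ⟨h1, h2⟩
      by_cases hc : i ≤ c.1 ∧ c.1 < i + k
      · exact ⟨vt k i c.2, Or.inl ⟨c.2, by simp [h2], rfl⟩, by simp; omega⟩
      · exact ⟨hrow k c.1, Or.inr ⟨c.1, by simp; omega, rfl⟩, by simp [h2]⟩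

end Tilings
end FF15


namespace FF15
section Main

variable {k m : ℕ} {T : Finset (Finset (ℕ × ℕ))}

lemma faultFree_of_tiling (hk : 2 ≤ k) (h1 : k < m) (h2 : m < 2 * k)
    (hT : IsTiling' m k k T) : FaultFree k T := by
  intro a ha hak hfault
  obtain ⟨t0, ht0, hc0⟩ := exists_tile hT (c := (0, 0)) (by simp; omega)
  rcases shape hk hT ht0 with ⟨x, hx, rfl⟩ | ⟨i, j, hik, hj, rfl⟩ | ⟨i, hik, rfl⟩
  · rcases hfault _ ht0 with h | h
    · have := h (x, k - 1) (by simp; omega); simp at this; omega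
    · have := h ((0 : ℕ), (0 : ℕ)) hc0; simp at this; omega
  · simp only [mem_vt] at hc0
    obtain ⟨t1, ht1, hc1⟩ := exists_tile hT (c := (m - 1, 0)) (by simp; omega)
    rcases shape hk hT ht1 with ⟨x, hx, rfl⟩ | ⟨i', j', hik', hj', rfl⟩ | ⟨i', hik', rfl⟩
    · rcases hfault _ ht1 with h | h
      · have := h (x, k - 1) (by simp; omega); simp at this; omega
      · have := h (x, 0) (by simp; omega); simp at this; omega
    · simp only [mem_vt] at hc1
      have hne : vt k i j ≠ vt k i' j' := by
        intro h
        obtain ⟨hi, hj⟩ := vt_inj hk h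
        omega
      have hm1 : ((m - k : ℕ), 0) ∈ vt k i j := by simp; omega
      have hm2 : ((m - k : ℕ), 0) ∈ vt k i' j' := by simp; omega
      exact hne (tiles_eq_of_mem hT ht0 ht1 hm1 hm2)
    · rcases hfault _ ht1 with h | h
      · have := h (i', k - 1) (by simp; omega); simp at this; omega
      · have := h (i', 0) (by simp; omega); simp at this; omega
  · rcases hfault _ ht0 with h | h
    · have := h (i, k - 1) (by simp; omega); simp at this; omega
    · have := h (i, 0) (by simp; omega); simp at this; omega

lemma tiling_classify (hk : 2 ≤ k) (h1 : k < m) (h2 : m < 2 * k) (hT : IsTiling' m k k T) :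
    T = TH m k ∨ (∃ i, i + k ≤ m ∧ T = Tsq m k i) ∨ (∃ i, i + k ≤ m ∧ T = Tvt m k i) := by
  obtain ⟨tr, htr, hcr⟩ := exists_tile hT (c := (m - k, 0)) (by simp; omega)
  rcases shape hk hT htr with ⟨x, hx, rfl⟩ | ⟨i, j, hik, hj, rfl⟩ | ⟨i, hik, rfl⟩
  · -- the tile through (m-k, 0) is horizontal: all tiles horizontal
    left
    have hx0 : x = m - k := by simp at hcr; omega
    subst hx0
    ext t
    simp only [TH, Finset.mem_image, Finset.mem_range]
    constructor
    · intro ht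
      rcases shape hk hT ht with ⟨y, hy, rfl⟩ | ⟨i, j, hik, hj, rfl⟩ | ⟨i, hik, rfl⟩
      · exact ⟨y, hy, rfl⟩
      · exfalso
        have h1' : ((m - k : ℕ), j) ∈ vt k i j := by simp; omega
        have h2' : ((m - k : ℕ), j) ∈ hrow k (m - k) := by simp; omega
        exact hrow_ne_vt hk (tiles_eq_of_mem hT htr ht h2' h1')
      · exfalso
        have h1' : ((m - k : ℕ), 0) ∈ sqr k i := by simp; omega
        exact hrow_ne_sqr hk (tiles_eq_of_mem hT htr ht hcr h1')
    · rintro ⟨y, hy, rfl⟩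
      obtain ⟨t, ht, hc⟩ := exists_tile hT (c := (y, 0)) (by simp; omega)
      rcases shape hk hT ht with ⟨y', hy', rfl⟩ | ⟨i, j, hik, hj, rfl⟩ | ⟨i, hik, rfl⟩
      · have : y' = y := by simp at hc; omega
        subst this
        exact ht
      · exfalso
        have h1' : ((m - k : ℕ), 0) ∈ vt k i j := by simp at hc ⊢; omega
        exact hrow_ne_vt hk (tiles_eq_of_mem hT htr ht hcr h1')
      · exfalso
        have h1' : ((m - k : ℕ), 0) ∈ sqr k i := by simp; omega
        exact hrow_ne_sqr hk (tiles_eq_of_mem hT htr ht hcr h1')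
  · -- the tile through (m-k, 0) is vertical
    right; right
    have hj0 : j = 0 := by simp at hcr; omega
    subst hj0
    refine ⟨i, hik, ?_⟩
    have hhrow : ∀ x, x < m → (x < i ∨ i + k ≤ x) → hrow k x ∈ T := by
      intro x hxm hxo
      obtain ⟨t, ht, hc⟩ := exists_tile hT (c := (x, 0)) (by simp; omega)
      rcases shape hk hT ht with ⟨y, hy, rfl⟩ | ⟨i', j', hik', hj', rfl⟩ | ⟨i', hik', rfl⟩
      · have : y = x := by simp at hc; omega
        subst this
        exact ht
      · exfalso
        have h1' : ((m - k : ℕ), 0) ∈ vt k i' j' := by simp at hc ⊢; omega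
        have h2' : ((m - k : ℕ), 0) ∈ vt k i 0 := by simp; omega
        have heq := tiles_eq_of_mem hT ht htr h1' h2'
        obtain ⟨hii, -⟩ := vt_inj hk heq
        simp at hc
        omega
      · exfalso
        have h1' : ((m - k : ℕ), 0) ∈ sqr k i' := by simp; omega
        have h2' : ((m - k : ℕ), 0) ∈ vt k i 0 := by simp; omega
        exact vt_ne_sqr hk (tiles_eq_of_mem hT htr ht h2' h1')
    have hvt : ∀ j, j < k → vt k i j ∈ T := by
      intro j hjk
      obtain ⟨t, ht, hc⟩ := exists_tile hT (c := (m - k, j)) (by simp; omega)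
      rcases shape hk hT ht with ⟨y, hy, rfl⟩ | ⟨i', j', hik', hj', rfl⟩ | ⟨i', hik', rfl⟩
      · exfalso
        have hy0 : y = m - k := by simp at hc; omega
        subst hy0
        have h2' : ((m - k : ℕ), 0) ∈ vt k i 0 := by simp; omega
        have h1' : ((m - k : ℕ), 0) ∈ hrow k (m - k) := by simp; omega
        exact hrow_ne_vt hk (tiles_eq_of_mem hT ht htr h1' h2')
      · have hj' : j' = j := by simp at hc; omega
        rcases lt_trichotomy i' i with hlt | heq | hgt
        · exfalso
          have hh := hhrow i' (by omega) (by omega)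
          have h1' : ((i' : ℕ), j') ∈ vt k i' j' := by simp; omega
          have h2' : ((i' : ℕ), j') ∈ hrow k i' := by simp; omega
          exact hrow_ne_vt hk (tiles_eq_of_mem hT hh ht h2' h1')
        · rwa [heq, hj'] at ht
        · exfalso
          have hh := hhrow (i' + k - 1) (by omega) (by omega)
          have h1' : ((i' + k - 1 : ℕ), j') ∈ vt k i' j' := by simp; omega
          have h2' : ((i' + k - 1 : ℕ), j') ∈ hrow k (i' + k - 1) := by simp; omega
          exact hrow_ne_vt hk (tiles_eq_of_mem hT hh ht h2' h1')
      · exfalso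
        have h1' : ((m - k : ℕ), 0) ∈ sqr k i' := by simp; omega
        have h2' : ((m - k : ℕ), 0) ∈ vt k i 0 := by simp; omega
        exact vt_ne_sqr hk (tiles_eq_of_mem hT htr ht h2' h1')
    ext t
    simp only [Tvt, Finset.mem_union, Finset.mem_image, Finset.mem_range, mem_rowsOut]
    constructor
    · intro ht
      rcases shape hk hT ht with ⟨y, hy, rfl⟩ | ⟨i', j', hik', hj', rfl⟩ | ⟨i', hik', rfl⟩
      · right; refine ⟨y, ⟨hy, ?_⟩, rfl⟩
        by_contra hmid
        have h1' : ((y : ℕ), 0) ∈ vt k i 0 := by simp; omega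
        have h2' : ((y : ℕ), 0) ∈ hrow k y := by simp; omega
        exact hrow_ne_vt hk (tiles_eq_of_mem hT ht htr h2' h1')
      · left
        refine ⟨j', hj', ?_⟩
        have hv := hvt j' hj'
        have h1' : ((m - k : ℕ), j') ∈ vt k i' j' := by simp; omega
        have h2' : ((m - k : ℕ), j') ∈ vt k i j' := by simp; omega
        exact tiles_eq_of_mem hT hv ht h2' h1'
      · exfalso
        have h1' : ((m - k : ℕ), 0) ∈ sqr k i' := by simp; omega
        have h2' : ((m - k : ℕ), 0) ∈ vt k i 0 := by simp; omega
        exact vt_ne_sqr hk (tiles_eq_of_mem hT htr ht h2' h1')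
    · rintro (⟨j, hj, rfl⟩ | ⟨x, hx, rfl⟩)
      · exact hvt j (Finset.mem_range.mp (by simpa using hj))
      · exact hhrow x hx.1 hx.2
  · -- the tile through (m-k, 0) is a square
    right; left
    refine ⟨i, hik, ?_⟩
    have hhrow : ∀ x, x < m → (x < i ∨ i + k ≤ x) → hrow k x ∈ T := by
      intro x hxm hxo
      obtain ⟨t, ht, hc⟩ := exists_tile hT (c := (x, 0)) (by simp; omega)
      rcases shape hk hT ht with ⟨y, hy, rfl⟩ | ⟨i', j', hik', hj', rfl⟩ | ⟨i', hik', rfl⟩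
      · have : y = x := by simp at hc; omega
        subst this
        exact ht
      · exfalso
        have h1' : ((m - k : ℕ), 0) ∈ vt k i' j' := by simp at hc ⊢; omega
        have h2' : ((m - k : ℕ), 0) ∈ sqr k i := by simp; omega
        exact vt_ne_sqr hk (tiles_eq_of_mem hT ht htr h1' h2')
      · exfalso
        have h1' : ((m - k : ℕ), 0) ∈ sqr k i' := by simp; omega
        have h2' : ((m - k : ℕ), 0) ∈ sqr k i := by simp; omega
        have heq := tiles_eq_of_mem hT ht htr h1' h2'
        have hii := sqr_inj hk heq
        simp at hc
        omega
    ext t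
    simp only [Tsq, Finset.mem_insert, Finset.mem_image, mem_rowsOut]
    constructor
    · intro ht
      rcases shape hk hT ht with ⟨y, hy, rfl⟩ | ⟨i', j', hik', hj', rfl⟩ | ⟨i', hik', rfl⟩
      · right; refine ⟨y, ⟨hy, ?_⟩, rfl⟩
        by_contra hmid
        have h1' : ((y : ℕ), 0) ∈ sqr k i := by simp; omega
        have h2' : ((y : ℕ), 0) ∈ hrow k y := by simp; omega
        exact hrow_ne_sqr hk (tiles_eq_of_mem hT ht htr h2' h1')
      · exfalso
        have h1' : ((m - k : ℕ), j') ∈ vt k i' j' := by simp; omega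
        have h2' : ((m - k : ℕ), j') ∈ sqr k i := by simp; omega
        exact vt_ne_sqr hk (tiles_eq_of_mem hT ht htr h1' h2')
      · left
        have h1' : ((m - k : ℕ), 0) ∈ sqr k i' := by simp; omega
        have h2' : ((m - k : ℕ), 0) ∈ sqr k i := by simp; omega
        exact tiles_eq_of_mem hT ht htr h1' h2'
    · rintro (rfl | ⟨x, hx, rfl⟩)
      · exact htr
      · exact hhrow x hx.1 hx.2

/-- the finite set of all fault-free tilings -/
def allT (m k : ℕ) : Finset (Finset (Finset (ℕ × ℕ))) :=
  insert (TH m k)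
    (((Finset.range (m - k + 1)).image (Tsq m k)) ∪ ((Finset.range (m - k + 1)).image (Tvt m k)))

lemma mem_allT_iff (hk : 2 ≤ k) (h1 : k < m) (h2 : m < 2 * k) (T : Finset (Finset (ℕ × ℕ))) :
    (IsTiling' m k k T ∧ FaultFree k T) ↔ T ∈ allT m k := by
  constructor
  · rintro ⟨hT, -⟩
    rcases tiling_classify hk h1 h2 hT with rfl | ⟨i, hik, rfl⟩ | ⟨i, hik, rfl⟩
    · simp [allT]
    · simp only [allT, Finset.mem_insert, Finset.mem_union, Finset.mem_image, Finset.mem_range]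
      exact Or.inr (Or.inl ⟨i, by omega, rfl⟩)
    · simp only [allT, Finset.mem_insert, Finset.mem_union, Finset.mem_image, Finset.mem_range]
      exact Or.inr (Or.inr ⟨i, by omega, rfl⟩)
  · intro hT
    simp only [allT, Finset.mem_insert, Finset.mem_union, Finset.mem_image,
      Finset.mem_range] at hT
    rcases hT with rfl | ⟨i, hi, rfl⟩ | ⟨i, hi, rfl⟩
    · exact ⟨isTiling_TH hk, faultFree_of_tiling hk h1 h2 (isTiling_TH hk)⟩
    · have h := isTiling_Tsq hk (show i + k ≤ m by omega)
      exact ⟨h, faultFree_of_tiling hk h1 h2 h⟩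
    · have h := isTiling_Tvt hk (show i + k ≤ m by omega)
      exact ⟨h, faultFree_of_tiling hk h1 h2 h⟩

lemma sqr_mem_Tsq (i : ℕ) : sqr k i ∈ Tsq m k i := Finset.mem_insert_self _ _

lemma card_allT (hk : 2 ≤ k) (h1 : k < m) (h2 : m < 2 * k) :
    (allT m k).card = 2 * m - 2 * k + 3 := by
  have hk0 : 0 < k := by omega
  have hTHsq : ∀ i, TH m k ≠ Tsq m k i := by
    intro i h
    have : sqr k i ∈ TH m k := h ▸ sqr_mem_Tsq i
    simp only [TH, Finset.mem_image] at this
    obtain ⟨x, -, hx⟩ := this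
    exact hrow_ne_sqr hk hx
  have hTHvt : ∀ i, TH m k ≠ Tvt m k i := by
    intro i h
    have hv : vt k i 0 ∈ Tvt m k i :=
      Finset.mem_union_left _ (Finset.mem_image_of_mem _ (Finset.mem_range.mpr hk0))
    have : vt k i 0 ∈ TH m k := h ▸ hv
    simp only [TH, Finset.mem_image] at this
    obtain ⟨x, -, hx⟩ := this
    exact hrow_ne_vt hk hx
  have hsqvt : ∀ i i', Tsq m k i ≠ Tvt m k i' := by
    intro i i' h
    have : sqr k i ∈ Tvt m k i' := h ▸ sqr_mem_Tsq i
    simp only [Tvt, Finset.mem_union, Finset.mem_image] at this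
    rcases this with ⟨j, -, hj⟩ | ⟨x, -, hx⟩
    · exact vt_ne_sqr hk hj
    · exact hrow_ne_sqr hk hx
  have hinj1 : Set.InjOn (Tsq m k) (Finset.range (m - k + 1)) := by
    intro a _ b _ h
    have : sqr k a ∈ Tsq m k b := h ▸ sqr_mem_Tsq a
    simp only [Tsq, Finset.mem_insert, Finset.mem_image] at this
    rcases this with hs | ⟨x, -, hx⟩
    · exact sqr_inj hk hs
    · exact absurd hx (hrow_ne_sqr hk)
  have hinj2 : Set.InjOn (Tvt m k) (Finset.range (m - k + 1)) := by
    intro a _ b _ h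
    have hv : vt k a 0 ∈ Tvt m k a :=
      Finset.mem_union_left _ (Finset.mem_image_of_mem _ (Finset.mem_range.mpr hk0))
    have : vt k a 0 ∈ Tvt m k b := h ▸ hv
    simp only [Tvt, Finset.mem_union, Finset.mem_image] at this
    rcases this with ⟨j, -, hj⟩ | ⟨x, -, hx⟩
    · exact (vt_inj hk hj).1.symm
    · exact absurd hx (hrow_ne_vt hk)
  have hdisj : Disjoint ((Finset.range (m - k + 1)).image (Tsq m k))
      ((Finset.range (m - k + 1)).image (Tvt m k)) := by
    rw [Finset.disjoint_left]
    rintro t ht ht'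
    simp only [Finset.mem_image] at ht ht'
    obtain ⟨i, -, rfl⟩ := ht
    obtain ⟨i', -, h⟩ := ht'
    exact hsqvt i i' h.symm
  have hTHnot : TH m k ∉
      ((Finset.range (m - k + 1)).image (Tsq m k)) ∪ ((Finset.range (m - k + 1)).image (Tvt m k)) := by
    intro h
    simp only [Finset.mem_union, Finset.mem_image] at h
    rcases h with ⟨i, -, h⟩ | ⟨i, -, h⟩
    · exact hTHsq i h.symm
    · exact hTHvt i h.symm
  rw [allT, Finset.card_insert_of_notMem hTHnot, Finset.card_union_of_disjoint hdisj,
    Finset.card_image_of_injOn hinj1, Finset.card_image_of_injOn hinj2, Finset.card_range]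
  omega

end Main
end FF15

theorem stmt_15 (k m : ℕ) (hk : 2 ≤ k) (h1 : k < m) (h2 : m < 2 * k) :
    numFFTilings' m k k = 2 * m - 2 * k + 3 := by
  rw [numFFTilings']
  rw [Nat.card_congr (Equiv.subtypeEquivRight (FF15.mem_allT_iff hk h1 h2))]
  rw [Nat.card_eq_fintype_card, Fintype.card_coe]
  exact FF15.card_allT hk h1 h2
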